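/- arXiv:1412.7101 — 4 statements merged into one kernel-verified Lean document; each statement's English description precedes it below -/
import Mathlib

section
/- For graphs G on n vertices and H on m vertices, S_G^⊥ ⊗ M_m + M_n ⊗ S_H^⊥ = S_{G⊠H}^⊥, where ⊥ denotes the orthogonal complement with respect to the trace inner product in M_n, M_m and M_{nm} respectively. -/
open Matrix Kronecker
open scoped ComplexOrder

noncomputable def opNorm {ι : Type*} [Fintype ι] [DecidableEq ι] (X : Matrix ι ι ℂ) : ℝ :=
  ‖Matrix.toEuclideanCLM (𝕜 := ℂ) X‖

noncomputable def opSys {ι : Type*} [DecidableEq ι] (G : Set (ι × ι)) : Submodule ℂ (Matrix ι ι ℂ) :=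
  Submodule.span ℂ { M | ∃ i j, ((i, j) ∈ G ∨ i = j) ∧ M = Matrix.single i j 1 }

noncomputable def perp {ι : Type*} [Fintype ι] (S : Set (Matrix ι ι ℂ)) : Submodule ℂ (Matrix ι ι ℂ) where
  carrier := { X | ∀ Y ∈ S, Matrix.trace (X * Yᴴ) = 0 }
  zero_mem' := by intro Y hY; simp
  add_mem' := by
    intro a b ha hb Y hY
    simp [Matrix.add_mul, ha Y hY, hb Y hY]
  smul_mem' := by
    intro c a ha Y hY
    simp [Matrix.smul_mul, ha Y hY]

noncomputable def qdist {ι : Type*} [Fintype ι] [DecidableEq ι]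
    (X : Matrix ι ι ℂ) (V : Set (Matrix ι ι ℂ)) : ℝ :=
  sInf { r : ℝ | ∃ K ∈ V, r = opNorm (X + K) }

def permU {n : ℕ} (π : Equiv.Perm (Fin n)) : Matrix (Fin n) (Fin n) ℂ :=
  Matrix.of fun i j => if i = π j then 1 else 0

def strongProd {n m : ℕ} (G : Set (Fin n × Fin n)) (H : Set (Fin m × Fin m)) :
    Set ((Fin n × Fin m) × (Fin n × Fin m)) :=
  { x | ((x.1.1, x.2.1) ∈ G ∧ x.1.2 = x.2.2) ∨ ((x.1.2, x.2.2) ∈ H ∧ x.1.1 = x.2.1) ∨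
      ((x.1.1, x.2.1) ∈ G ∧ (x.1.2, x.2.2) ∈ H) }

lemma trace_mul_std {ι : Type*} [Fintype ι] [DecidableEq ι] (X : Matrix ι ι ℂ) (i j : ι) :
    Matrix.trace (X * (Matrix.single i j (1:ℂ))ᴴ) = X i j := by
  simp [Matrix.trace, Matrix.diag, Matrix.mul_apply, Matrix.single,
    Matrix.conjTranspose_apply, Matrix.of_apply, apply_ite, ite_and, Finset.sum_ite_eq]

lemma mem_perp_opSys {ι : Type*} [Fintype ι] [DecidableEq ι] (G : Set (ι × ι))
    (X : Matrix ι ι ℂ) :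
    X ∈ perp (opSys G : Set (Matrix ι ι ℂ)) ↔ ∀ i j, ((i, j) ∈ G ∨ i = j) → X i j = 0 := by
  constructor
  · intro hX i j hij
    have := hX (Matrix.single i j 1)
      (Submodule.subset_span ⟨i, j, hij, rfl⟩)
    rwa [trace_mul_std] at this
  · intro h Y hY
    induction hY using Submodule.span_induction with
    | mem Y hY =>
      obtain ⟨i, j, hij, rfl⟩ := hY
      rw [trace_mul_std]; exact h i j hij
    | zero => simp
    | add a b _ _ ha hb => simp [Matrix.conjTranspose_add, Matrix.mul_add, ha, hb]
    | smul c a _ ha => simp [Matrix.conjTranspose_smul, Matrix.mul_smul, ha]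

lemma std_kron {ι κ : Type*} [DecidableEq ι] [DecidableEq κ] (i j : ι) (k l : κ) (c d : ℂ) :
    (Matrix.single i j c) ⊗ₖ (Matrix.single k l d)
      = Matrix.single (i,k) (j,l) (c*d) := by
  ext ⟨a,b⟩ ⟨a',b'⟩
  simp [Matrix.kroneckerMap_apply, Matrix.single, Prod.ext_iff]
  split_ifs <;> tauto

lemma std_perp {ι : Type*} [Fintype ι] [DecidableEq ι] (G : Set (ι × ι)) (i j : ι) (c : ℂ)
    (h : ¬ ((i,j) ∈ G ∨ i = j)) :
    Matrix.single i j c ∈ perp (opSys G : Set (Matrix ι ι ℂ)) := by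
  rw [mem_perp_opSys]
  intro a b hab
  by_cases h1 : i = a ∧ j = b
  · exact absurd (h1.1 ▸ h1.2 ▸ hab) h
  · simp [Matrix.single, h1]

theorem stmt9 (n m : ℕ) (G : Set (Fin n × Fin n)) (H : Set (Fin m × Fin m))
    (hsymG : ∀ i j, (i, j) ∈ G → (j, i) ∈ G) (hirrG : ∀ i, (i, i) ∉ G)
    (hsymH : ∀ i j, (i, j) ∈ H → (j, i) ∈ H) (hirrH : ∀ i, (i, i) ∉ H) :
    Submodule.span ℂ { M | ∃ K ∈ perp (opSys G : Set (Matrix (Fin n) (Fin n) ℂ)),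
        ∃ Y : Matrix (Fin m) (Fin m) ℂ, M = K ⊗ₖ Y } ⊔
      Submodule.span ℂ { M | ∃ X : Matrix (Fin n) (Fin n) ℂ,
        ∃ L ∈ perp (opSys H : Set (Matrix (Fin m) (Fin m) ℂ)), M = X ⊗ₖ L } =
      perp (opSys (strongProd G H) : Set (Matrix ((Fin n) × (Fin m)) ((Fin n) × (Fin m)) ℂ)) := by
  apply le_antisymm
  · apply sup_le
    · rw [Submodule.span_le]
      rintro M ⟨K, hK, Y, rfl⟩
      rw [SetLike.mem_coe, mem_perp_opSys]
      rintro ⟨i,k⟩ ⟨j,l⟩ hgood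
      have hG : (i,j) ∈ G ∨ i = j := by
        rcases hgood with (h|h|h) | h
        · exact Or.inl h.1
        · exact Or.inr h.2
        · exact Or.inl h.1
        · exact Or.inr (congrArg Prod.fst h)
      have := (mem_perp_opSys G K).1 hK i j hG
      simp [Matrix.kroneckerMap_apply, this]
    · rw [Submodule.span_le]
      rintro M ⟨X, L, hL, rfl⟩
      rw [SetLike.mem_coe, mem_perp_opSys]
      rintro ⟨i,k⟩ ⟨j,l⟩ hgood
      have hH : (k,l) ∈ H ∨ k = l := by
        rcases hgood with (h|h|h) | h
        · exact Or.inr h.2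
        · exact Or.inl h.1
        · exact Or.inl h.2
        · exact Or.inr (congrArg Prod.snd h)
      have := (mem_perp_opSys H L).1 hL k l hH
      simp [Matrix.kroneckerMap_apply, this]
  · intro Z hZ
    rw [mem_perp_opSys] at hZ
    rw [Matrix.matrix_eq_sum_single Z]
    apply Submodule.sum_mem
    intro p _
    apply Submodule.sum_mem
    intro q _
    by_cases hg : (p.1, q.1) ∈ G ∨ p.1 = q.1
    · by_cases hh : (p.2, q.2) ∈ H ∨ p.2 = q.2
      · have hZpq : Z p q = 0 := by
          apply hZ p q
          rcases hg with hg | hg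
          · rcases hh with hh | hh
            · exact Or.inl (Or.inr (Or.inr ⟨hg, hh⟩))
            · exact Or.inl (Or.inl ⟨hg, hh⟩)
          · rcases hh with hh | hh
            · exact Or.inl (Or.inr (Or.inl ⟨hh, hg⟩))
            · exact Or.inr (Prod.ext hg hh)
        rw [hZpq]
        simp
      · apply Submodule.mem_sup_right
        apply Submodule.subset_span
        refine ⟨Matrix.single p.1 q.1 (Z p q), Matrix.single p.2 q.2 1,
          std_perp H p.2 q.2 1 hh, ?_⟩
        rw [std_kron, mul_one]
    · apply Submodule.mem_sup_left
      apply Submodule.subset_span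
      refine ⟨Matrix.single p.1 q.1 1, std_perp G p.1 q.1 1 hg,
        Matrix.single p.2 q.2 (Z p q), ?_⟩
      rw [std_kron, one_mul]
end

section
/- Let G be a graph on k vertices and K_{p,q} an induced complete bipartite subgraph of G with parts {1,...,p} and {p+1,...,p+q}. Let X ∈ M_k be the 0-1 matrix with x_{i,j} = 1 iff 1 ≤ i ≤ p and p+1 ≤ j ≤ p+q. Then dist(X, S_G^⊥) = ‖X‖ = √(pq) in the operator norm. -/
open Matrix Kronecker
open scoped ComplexOrder

/-! Auxiliary lemmas -/

lemma sum_ind {R : Type*} [AddCommMonoid R] (k a n : ℕ) (h : a + n ≤ k) (c : R) :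
    ∑ j : Fin k, (if a ≤ j.val ∧ j.val < a + n then c else 0) = n • c := by
  rw [Fin.sum_univ_eq_sum_range (fun m => if a ≤ m ∧ m < a + n then c else 0) k,
      ← Finset.sum_filter]
  have hf : (Finset.range k).filter (fun m => a ≤ m ∧ m < a + n) = Finset.Ico a (a + n) := by
    ext m; simp [Finset.mem_range, Finset.mem_Ico]; omega
  rw [hf, Finset.sum_const, Nat.card_Ico]
  congr 1; omega

lemma sum_ind0 {R : Type*} [AddCommMonoid R] (k p : ℕ) (h : p ≤ k) (c : R) :
    ∑ j : Fin k, (if j.val < p then c else 0) = p • c := by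
  have := sum_ind k 0 p (by omega) c
  simpa using this

lemma trace_mul_std_s11 (k : ℕ) (K : Matrix (Fin k) (Fin k) ℂ) (i j : Fin k) :
    Matrix.trace (K * (Matrix.single i j 1)ᴴ) = K i j := by
  simp [Matrix.trace, Matrix.mul_apply, Matrix.single, Matrix.conjTranspose_apply,
    Matrix.diag, apply_ite, ite_and, Finset.sum_ite_eq, Finset.sum_ite_eq']

noncomputable def vvec (k p q : ℕ) : EuclideanSpace ℂ (Fin k) :=
  (WithLp.equiv 2 _).symm (fun j : Fin k => if p ≤ j.val ∧ j.val < p + q then 1 else 0)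

noncomputable def uvec (k p : ℕ) : EuclideanSpace ℂ (Fin k) :=
  (WithLp.equiv 2 _).symm (fun i : Fin k => if i.val < p then 1 else 0)

lemma norm_uvec (k p : ℕ) (h : p ≤ k) : ‖uvec k p‖ = Real.sqrt p := by
  rw [EuclideanSpace.norm_eq]
  congr 1
  have : ∀ i : Fin k, ‖uvec k p i‖ ^ 2 = (if i.val < p then (1:ℝ) else 0) := by
    intro i
    by_cases hi : i.val < p <;> simp [uvec, hi]
  rw [Finset.sum_congr rfl fun i _ => this i, sum_ind0 k p h (1:ℝ)]
  simp

lemma norm_vvec (k p q : ℕ) (h : p + q ≤ k) : ‖vvec k p q‖ = Real.sqrt q := by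
  rw [EuclideanSpace.norm_eq]
  congr 1
  have : ∀ j : Fin k, ‖vvec k p q j‖ ^ 2
      = (if p ≤ j.val ∧ j.val < p + q then (1:ℝ) else 0) := by
    intro j
    by_cases hj : p ≤ j.val ∧ j.val < p + q <;> simp [vvec, hj]
  rw [Finset.sum_congr rfl fun j _ => this j, sum_ind k p q h (1:ℝ)]
  simp

lemma opNorm_upper (k p q : ℕ) (hpq : p + q ≤ k) :
    opNorm (Matrix.of fun i j : Fin k =>
      if i.val < p ∧ p ≤ j.val ∧ j.val < p + q then (1 : ℂ) else 0) ≤ Real.sqrt (p * q) := by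
  set X : Matrix (Fin k) (Fin k) ℂ := Matrix.of fun i j : Fin k =>
      if i.val < p ∧ p ≤ j.val ∧ j.val < p + q then (1 : ℂ) else 0 with hX
  show ‖Matrix.toEuclideanCLM (𝕜 := ℂ) X‖ ≤ _
  apply ContinuousLinearMap.opNorm_le_bound _ (Real.sqrt_nonneg _)
  intro w
  set x : Fin k → ℂ := WithLp.equiv 2 _ w with hx
  set s : ℂ := ∑ j : Fin k, (if p ≤ j.val ∧ j.val < p + q then x j else 0) with hs
  have hmv : ∀ i : Fin k, X.mulVec x i = if i.val < p then s else 0 := by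
    intro i
    by_cases hi : i.val < p
    · simp only [Matrix.mulVec, dotProduct, hX, Matrix.of_apply, hi, true_and,
        ite_mul, one_mul, zero_mul, if_pos hi]
      rfl
    · simp [Matrix.mulVec, dotProduct, hX, hi]
  have hTw : Matrix.toEuclideanCLM (𝕜 := ℂ) X w = (WithLp.equiv 2 _).symm (X.mulVec x) := rfl
  have hnorm : ‖Matrix.toEuclideanCLM (𝕜 := ℂ) X w‖ = Real.sqrt p * ‖s‖ := by
    rw [hTw, EuclideanSpace.norm_eq]
    have : ∀ i : Fin k, ‖((WithLp.equiv 2 _).symm (X.mulVec x) : EuclideanSpace ℂ (Fin k)) i‖ ^ 2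
        = (if i.val < p then ‖s‖ ^ 2 else 0) := by
      intro i
      have : ((WithLp.equiv 2 _).symm (X.mulVec x) : EuclideanSpace ℂ (Fin k)) i
          = X.mulVec x i := rfl
      rw [this, hmv i]
      by_cases hi : i.val < p <;> simp [hi]
    rw [Finset.sum_congr rfl fun i _ => this i, sum_ind0 k p (by omega) (‖s‖ ^ 2),
      nsmul_eq_mul, Real.sqrt_mul (by positivity), Real.sqrt_sq (norm_nonneg s)]
  have hsv : s = inner (𝕜 := ℂ) (vvec k p q) w := by
    rw [hs]
    simp only [PiLp.inner_apply, RCLike.inner_apply]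
    apply Finset.sum_congr rfl
    intro j _
    by_cases hj : p ≤ j.val ∧ j.val < p + q <;>
      simp [vvec, hj, hx]
  have hsle : ‖s‖ ≤ Real.sqrt q * ‖w‖ := by
    rw [hsv, ← norm_vvec k p q hpq]
    exact norm_inner_le_norm _ _
  rw [hnorm]
  calc Real.sqrt p * ‖s‖ ≤ Real.sqrt p * (Real.sqrt q * ‖w‖) := by
        apply mul_le_mul_of_nonneg_left hsle (Real.sqrt_nonneg _)
    _ = Real.sqrt (p * q) * ‖w‖ := by
        rw [Real.sqrt_mul (by positivity : (0:ℝ) ≤ (p:ℝ))]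
        ring

lemma opNorm_lower (k p q : ℕ) (hpq : p + q ≤ k) (M : Matrix (Fin k) (Fin k) ℂ)
    (hM : ∀ i j : Fin k, i.val < p → p ≤ j.val → j.val < p + q → M i j = 1) :
    Real.sqrt (p * q) ≤ opNorm M := by
  rcases Nat.eq_zero_or_pos p with hp | hp
  · subst hp
    have h0 : Real.sqrt ((0:ℕ) * q) = 0 := by norm_num
    rw [h0]; exact norm_nonneg _
  rcases Nat.eq_zero_or_pos q with hq | hq
  · subst hq
    have h0 : Real.sqrt ((p:ℝ) * (0:ℕ)) = 0 := by norm_num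
    rw [h0]; exact norm_nonneg _
  set T := Matrix.toEuclideanCLM (𝕜 := ℂ) M with hT
  set v := vvec k p q with hv
  set u := uvec k p with hu
  have hinner : inner (𝕜 := ℂ) u (T v) = ((p * q : ℕ) : ℂ) := by
    have hTv : T v = (WithLp.equiv 2 _).symm
        (M.mulVec fun j : Fin k => if p ≤ j.val ∧ j.val < p + q then 1 else 0) := by
      rw [hT, hv, vvec]
      simp [Matrix.toLin'_apply]
    rw [hTv]
    simp only [hu, uvec, PiLp.inner_apply, RCLike.inner_apply]
    have step : ∀ i : Fin k,
        (starRingEnd ℂ) (((WithLp.equiv 2 _).symm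
            (fun i : Fin k => if i.val < p then (1:ℂ) else 0) : EuclideanSpace ℂ (Fin k)) i) *
          ((WithLp.equiv 2 _).symm
            (M.mulVec fun j : Fin k => if p ≤ j.val ∧ j.val < p + q then 1 else 0)
              : EuclideanSpace ℂ (Fin k)) i
        = if i.val < p then ((q : ℕ) : ℂ) else 0 := by
      intro i
      have h1 : ((WithLp.equiv 2 _).symm
          (fun i : Fin k => if i.val < p then (1:ℂ) else 0) : EuclideanSpace ℂ (Fin k)) i
          = if i.val < p then (1:ℂ) else 0 := rfl
      have h2 : ((WithLp.equiv 2 _).symm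
          (M.mulVec fun j : Fin k => if p ≤ j.val ∧ j.val < p + q then 1 else 0)
            : EuclideanSpace ℂ (Fin k)) i
          = M.mulVec (fun j : Fin k => if p ≤ j.val ∧ j.val < p + q then 1 else 0) i := rfl
      rw [h1, h2]
      by_cases hi : i.val < p
      · simp only [hi, if_true, _root_.map_one, one_mul]
        have : M.mulVec (fun j : Fin k => if p ≤ j.val ∧ j.val < p + q then 1 else 0) i
            = ∑ j : Fin k, (if p ≤ j.val ∧ j.val < p + q then (1:ℂ) else 0) := by
          simp only [Matrix.mulVec, dotProduct, mul_ite, mul_one, mul_zero]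
          apply Finset.sum_congr rfl
          intro j _
          by_cases hj : p ≤ j.val ∧ j.val < p + q
          · simp [hj, hM i j hi hj.1 hj.2]
          · simp [hj]
        rw [this, sum_ind k p q hpq (1:ℂ)]
        simp
      · simp [hi]
    rw [Finset.sum_congr rfl fun i _ => (mul_comm _ _).trans (step i), sum_ind0 k p (by omega) ((q : ℕ) : ℂ)]
    push_cast
    ring
  have hnorm_inner : ‖inner (𝕜 := ℂ) u (T v)‖ = (p * q : ℝ) := by
    rw [hinner]
    push_cast
    simp [Complex.norm_real]
  have hle : (p * q : ℝ) ≤ ‖u‖ * (‖T‖ * ‖v‖) := by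
    rw [← hnorm_inner]
    calc ‖inner (𝕜 := ℂ) u (T v)‖ ≤ ‖u‖ * ‖T v‖ := norm_inner_le_norm _ _
      _ ≤ ‖u‖ * (‖T‖ * ‖v‖) := by
          apply mul_le_mul_of_nonneg_left (T.le_opNorm v) (norm_nonneg u)
  rw [norm_uvec k p (by omega), norm_vvec k p q hpq] at hle
  have hsq : Real.sqrt p * Real.sqrt q = Real.sqrt (p * q) := by
    rw [← Real.sqrt_mul (by positivity)]
  have hpos : 0 < Real.sqrt (p * q) := by
    apply Real.sqrt_pos.mpr
    positivity
  have key : Real.sqrt (p*q) * Real.sqrt (p*q) ≤ Real.sqrt (p*q) * ‖T‖ := by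
    have hms : Real.sqrt ((p:ℝ)*(q:ℝ)) * Real.sqrt ((p:ℝ)*(q:ℝ)) = ((p:ℝ)*(q:ℝ)) :=
      Real.mul_self_sqrt (by positivity)
    rw [hms]
    calc (p*q:ℝ) ≤ Real.sqrt p * (‖T‖ * Real.sqrt q) := hle
      _ = Real.sqrt (p*q) * ‖T‖ := by rw [← hsq]; ring
  exact le_of_mul_le_mul_left key hpos

theorem stmt11 (k p q : ℕ) (hpq : p + q ≤ k) (G : Set (Fin k × Fin k))
    (hsym : ∀ i j, (i, j) ∈ G → (j, i) ∈ G) (hirr : ∀ i, (i, i) ∉ G)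
    (hind : ∀ i j : Fin k, i.val < p + q → j.val < p + q →
      ((i, j) ∈ G ↔ ((i.val < p ∧ p ≤ j.val) ∨ (j.val < p ∧ p ≤ i.val)))) :
    qdist (Matrix.of fun i j : Fin k =>
        if i.val < p ∧ p ≤ j.val ∧ j.val < p + q then (1 : ℂ) else 0)
        (perp (opSys G : Set (Matrix (Fin k) (Fin k) ℂ))) =
      opNorm (Matrix.of fun i j : Fin k =>
        if i.val < p ∧ p ≤ j.val ∧ j.val < p + q then (1 : ℂ) else 0) ∧
    opNorm (Matrix.of fun i j : Fin k =>
        if i.val < p ∧ p ≤ j.val ∧ j.val < p + q then (1 : ℂ) else 0) =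
      Real.sqrt (p * q) := by
  set X : Matrix (Fin k) (Fin k) ℂ := Matrix.of fun i j : Fin k =>
      if i.val < p ∧ p ≤ j.val ∧ j.val < p + q then (1 : ℂ) else 0 with hX
  have hXnorm : opNorm X = Real.sqrt (p * q) := by
    apply le_antisymm (opNorm_upper k p q hpq)
    apply opNorm_lower k p q hpq
    intro i j hi hj1 hj2
    simp [hX, hi, hj1, hj2]
  refine ⟨?_, hXnorm⟩
  have hlb : ∀ r ∈ { r : ℝ | ∃ K ∈ (perp (opSys G : Set (Matrix (Fin k) (Fin k) ℂ))
      : Set (Matrix (Fin k) (Fin k) ℂ)), r = opNorm (X + K) }, Real.sqrt (p * q) ≤ r := by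
    rintro r ⟨K, hK, rfl⟩
    apply opNorm_lower k p q hpq
    intro i j hi hj1 hj2
    have hG : (i, j) ∈ G := by
      rw [hind i j (by omega) (by omega)]
      left; exact ⟨hi, hj1⟩
    have hmem : Matrix.single i j 1 ∈ (opSys G : Set (Matrix (Fin k) (Fin k) ℂ)) :=
      Submodule.subset_span ⟨i, j, Or.inl hG, rfl⟩
    have hK0 : K i j = 0 := by
      have := hK _ hmem
      rwa [trace_mul_std_s11] at this
    simp [Matrix.add_apply, hK0, hX, hi, hj1, hj2]
  have hmem0 : Real.sqrt (p * q) ∈ { r : ℝ | ∃ K ∈ (perp (opSys G : Set (Matrix (Fin k) (Fin k) ℂ))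
      : Set (Matrix (Fin k) (Fin k) ℂ)), r = opNorm (X + K) } := by
    refine ⟨0, Submodule.zero_mem _, ?_⟩
    rw [add_zero, hXnorm]
  rw [hXnorm]
  unfold qdist
  apply le_antisymm
  · exact csInf_le ⟨Real.sqrt (p * q), hlb⟩ hmem0
  · exact le_csInf ⟨_, hmem0⟩ hlb
end

section
/- If A, B ∈ M_n(ℂ) are positive semidefinite and C, D ∈ M_m(ℂ) are positive semidefinite with block matrices [[A, X],[X*, B]] ⪰ 0 in M_{2n} and [[C, Y],[Y*, D]] ⪰ 0 in M_{2m}, then the block matrix [[A⊗C, X⊗Y],[(X⊗Y)*, B⊗D]] is positive semidefinite in M_{2nm}. -/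
open Matrix Kronecker
open scoped ComplexOrder

lemma kron_conjT {n m : Type*} (A : Matrix n n ℂ) (B : Matrix m m ℂ) :
    (A ⊗ₖ B)ᴴ = Aᴴ ⊗ₖ Bᴴ := by
  ext ⟨i,j⟩ ⟨k,l⟩
  simp [Matrix.kroneckerMap_apply, Matrix.conjTranspose_apply, mul_comm]

lemma kron_psd {n m : Type*} [Fintype n] [Fintype m] [DecidableEq n] [DecidableEq m]
    {A : Matrix n n ℂ} {B : Matrix m m ℂ} (hA : A.PosSemidef) (hB : B.PosSemidef) :
    (A ⊗ₖ B).PosSemidef := by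
  exact hA.kronecker hB


theorem stmt17 (n m : ℕ) (A B X : Matrix (Fin n) (Fin n) ℂ)
    (C D Y : Matrix (Fin m) (Fin m) ℂ)
    (hA : A.PosSemidef) (hB : B.PosSemidef) (hC : C.PosSemidef) (hD : D.PosSemidef)
    (h1 : (Matrix.fromBlocks A X Xᴴ B).PosSemidef)
    (h2 : (Matrix.fromBlocks C Y Yᴴ D).PosSemidef) :
    (Matrix.fromBlocks (A ⊗ₖ C) (X ⊗ₖ Y) (X ⊗ₖ Y)ᴴ (B ⊗ₖ D)).PosSemidef := by
  set e : (Fin n × Fin m) ⊕ (Fin n × Fin m) → (Fin n ⊕ Fin n) × (Fin m ⊕ Fin m) :=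
    Sum.elim (fun p => (Sum.inl p.1, Sum.inl p.2)) (fun p => (Sum.inr p.1, Sum.inr p.2)) with he
  have key : Matrix.fromBlocks (A ⊗ₖ C) (X ⊗ₖ Y) (X ⊗ₖ Y)ᴴ (B ⊗ₖ D) =
      ((Matrix.fromBlocks A X Xᴴ B) ⊗ₖ (Matrix.fromBlocks C Y Yᴴ D)).submatrix e e := by
    ext i j
    rcases i with ⟨i1, i2⟩ | ⟨i1, i2⟩ <;> rcases j with ⟨j1, j2⟩ | ⟨j1, j2⟩ <;>
      simp [he, Matrix.submatrix_apply, Matrix.kroneckerMap_apply, Matrix.fromBlocks_apply₁₁,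
        Matrix.conjTranspose_apply, kron_conjT, mul_comm]
  rw [key]
  exact (kron_psd h1 h2).submatrix e
end

section
/- If [[A, X],[X*, C]] is positive semidefinite in M_{2n}(ℂ) with A, C ∈ M_n(ℂ), then ‖X‖ ≤ max{‖A‖, ‖C‖} in the operator norm. -/
open Matrix Kronecker
open scoped ComplexOrder

theorem stmt18 (n : ℕ) (A C X : Matrix (Fin n) (Fin n) ℂ)
    (h : (Matrix.fromBlocks A X Xᴴ C).PosSemidef) :
    opNorm X ≤ max (opNorm A) (opNorm C) := by
  set m := max (opNorm A) (opNorm C) with hm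
  have ha : opNorm A ≤ m := le_max_left _ _
  have hc : opNorm C ≤ m := le_max_right _ _
  have hm0 : 0 ≤ m := le_trans (norm_nonneg _) ha
  -- generic bound on quadratic forms
  have hquad : ∀ (M : Matrix (Fin n) (Fin n) ℂ) (w : Fin n → ℂ),
      (star w ⬝ᵥ (M *ᵥ w)).re ≤ opNorm M * ‖(WithLp.equiv 2 (Fin n → ℂ)).symm w‖ ^ 2 := by
    intro M w
    have h1 : (star w ⬝ᵥ (M *ᵥ w)) =
        inner ℂ ((WithLp.equiv 2 (Fin n → ℂ)).symm w)
          (Matrix.toEuclideanCLM (𝕜 := ℂ) M ((WithLp.equiv 2 (Fin n → ℂ)).symm w)) := by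
      rw [dotProduct_comm]; rfl
    rw [h1]
    calc RCLike.re (inner ℂ ((WithLp.equiv 2 (Fin n → ℂ)).symm w)
          (Matrix.toEuclideanCLM (𝕜 := ℂ) M ((WithLp.equiv 2 (Fin n → ℂ)).symm w)) : ℂ)
        ≤ ‖(WithLp.equiv 2 (Fin n → ℂ)).symm w‖ *
            ‖Matrix.toEuclideanCLM (𝕜 := ℂ) M ((WithLp.equiv 2 (Fin n → ℂ)).symm w)‖ :=
          re_inner_le_norm _ _
      _ ≤ ‖(WithLp.equiv 2 (Fin n → ℂ)).symm w‖ *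
            (opNorm M * ‖(WithLp.equiv 2 (Fin n → ℂ)).symm w‖) := by
          gcongr
          exact (Matrix.toEuclideanCLM (𝕜 := ℂ) M).le_opNorm _
      _ = opNorm M * ‖(WithLp.equiv 2 (Fin n → ℂ)).symm w‖ ^ 2 := by ring
  rw [opNorm]
  apply ContinuousLinearMap.opNorm_le_bound _ hm0
  intro v
  set v0 : Fin n → ℂ := WithLp.equiv 2 (Fin n → ℂ) v with hv0
  set y0 : Fin n → ℂ := X *ᵥ v0 with hy0
  have hveq : (WithLp.equiv 2 (Fin n → ℂ)).symm v0 = v := by simp [hv0]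
  have hTv : Matrix.toEuclideanCLM (𝕜 := ℂ) X v = (WithLp.equiv 2 (Fin n → ℂ)).symm y0 := by
    rw [← hveq]; rfl
  rw [hTv]
  set t : ℝ := ‖(WithLp.equiv 2 (Fin n → ℂ)).symm y0‖ with ht
  set r : ℝ := ‖v‖ with hr
  have ht0 : 0 ≤ t := norm_nonneg _
  have hr0 : 0 ≤ r := norm_nonneg _
  -- norm squared identity
  have hyy : (star y0 ⬝ᵥ y0).re = t ^ 2 := by
    have h1 := inner_self_eq_norm_sq (𝕜 := ℂ) ((WithLp.equiv 2 (Fin n → ℂ)).symm y0)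
    rw [dotProduct_comm]
    exact h1
  rcases eq_or_lt_of_le ht0 with ht0' | ht0'
  · rw [← ht0']; positivity
  -- main inequality from positive semidefiniteness
  have key : ∀ s : ℝ, 2 * s * t ^ 2 ≤ s ^ 2 * (opNorm A * t ^ 2) + opNorm C * r ^ 2 := by
    intro s
    set u0 : Fin n → ℂ := (-(s:ℂ)) • y0 with hu0
    have hz : star (Sum.elim u0 v0) ⬝ᵥ ((Matrix.fromBlocks A X Xᴴ C) *ᵥ Sum.elim u0 v0)
        = (s:ℂ)^2 * (star y0 ⬝ᵥ (A *ᵥ y0)) - s * (star y0 ⬝ᵥ y0) - s * (star y0 ⬝ᵥ y0)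
          + (star v0 ⬝ᵥ (C *ᵥ v0)) := by
      have key' : star v0 ⬝ᵥ (Xᴴ *ᵥ y0) = star y0 ⬝ᵥ y0 := by
        rw [dotProduct_mulVec, ← star_mulVec, ← hy0]
      simp [Function.star_sumElim, fromBlocks_mulVec, sumElim_dotProduct_sumElim, hu0,
        mulVec_smul, dotProduct_add, smul_dotProduct, dotProduct_smul, star_smul, key',
        dotProduct_comm (star y0) y0, mulVec_neg, dotProduct_neg, neg_smul]
      rw [← hy0, dotProduct_comm (star y0) y0]
      ring
    have hpos := h.dotProduct_mulVec_nonneg (Sum.elim u0 v0)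
    rw [hz, Complex.nonneg_iff] at hpos
    have hA' : (star y0 ⬝ᵥ (A *ᵥ y0)).re ≤ opNorm A * t ^ 2 := by
      have := hquad A y0; rwa [← ht] at this
    have hC' : (star v0 ⬝ᵥ (C *ᵥ v0)).re ≤ opNorm C * r ^ 2 := by
      have := hquad C v0; rwa [hveq, ← hr] at this
    have hexp : ((s:ℂ)^2 * (star y0 ⬝ᵥ (A *ᵥ y0)) - s * (star y0 ⬝ᵥ y0) - s * (star y0 ⬝ᵥ y0)
        + (star v0 ⬝ᵥ (C *ᵥ v0))).re
        = s^2 * (star y0 ⬝ᵥ (A *ᵥ y0)).re - s * (star y0 ⬝ᵥ y0).re - s * (star y0 ⬝ᵥ y0).re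
          + (star v0 ⬝ᵥ (C *ᵥ v0)).re := by
      simp [Complex.sub_re, Complex.add_re, ← Complex.ofReal_pow, Complex.re_ofReal_mul]
    have hre := hpos.1
    rw [hexp, hyy] at hre
    nlinarith [hre, hC', hyy, mul_le_mul_of_nonneg_left hA' (sq_nonneg s)]
  -- choose s = r / t
  rcases eq_or_lt_of_le hr0 with hr0' | hr0'
  · exfalso
    have hv : v = 0 := by
      have : ‖v‖ = 0 := by rw [← hr, ← hr0']
      rwa [norm_eq_zero] at this
    have hy : y0 = 0 := by simp [hy0, hv0, hv]
    rw [ht, hy] at ht0'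
    simp at ht0'
  · have htne : t ≠ 0 := ne_of_gt ht0'
    have hfin := key (r / t)
    have e1 : 2 * (r / t) * t ^ 2 = 2 * r * t := by field_simp
    have e2 : (r / t) ^ 2 * (opNorm A * t ^ 2) = opNorm A * r ^ 2 := by
      field_simp
    rw [e1, e2] at hfin
    nlinarith [mul_le_mul_of_nonneg_right ha (sq_nonneg r),
      mul_le_mul_of_nonneg_right hc (sq_nonneg r), hr0']
end
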